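/- Let n ≥ 1, let π ∈ ℝ^K and π' ∈ ℝ^{K'} be positive probability vectors, let C ∈ C_{π,π'}, and let θ^{(1)} ∈ [0,1]^{K×K} and θ^{(2)} ∈ [0,1]^{K'×K'} be symmetric matrices with all entries in [0,1]. Then each view marginally follows a single-view SBM: for every symmetric zero-diagonal x1 : Fin n × Fin n → {0,1}, summing the two-view SBM joint likelihood over all symmetric zero-diagonal x2 : Fin n × Fin n → {0,1} gives ∑_{x2} L_{π,π',C,θ^{(1)},θ^{(2)}}(x1, x2) = L_{π,θ^{(1)}}(x1). -/
import Mathlib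


open Finset

/-- The constraint set `C_{π,π'}` of Gao et al. -/
def Cset {K K' : ℕ} (π : Fin K → ℝ) (π' : Fin K' → ℝ) :
    Set (Matrix (Fin K) (Fin K') ℝ) :=
  {C | (∀ k k', 0 ≤ C k k') ∧ (∀ k, ∑ k', C k k' * π' k' = 1) ∧
    (∀ k', ∑ k, π k * C k k' = 1)}

/-- The stochastic block model likelihood of an adjacency function
`x : Fin n → Fin n → Fin 2` (edge values in `{0,1}`). -/
def sbmL {n K : ℕ} (π : Fin K → ℝ) (θ : Matrix (Fin K) (Fin K) ℝ)
    (x : Fin n → Fin n → Fin 2) : ℝ :=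
  ∑ z : Fin n → Fin K, (∏ i, π (z i)) *
    ∏ i, ∏ j, if i < j then
      θ (z i) (z j) ^ (x i j : ℕ) * (1 - θ (z i) (z j)) ^ (1 - (x i j : ℕ)) else 1

/-- The two-view stochastic block model joint likelihood of a pair of adjacency functions. -/
def sbm2L {n K K' : ℕ} (π : Fin K → ℝ) (π' : Fin K' → ℝ)
    (C : Matrix (Fin K) (Fin K') ℝ)
    (θ1 : Matrix (Fin K) (Fin K) ℝ) (θ2 : Matrix (Fin K') (Fin K') ℝ)
    (x1 x2 : Fin n → Fin n → Fin 2) : ℝ :=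
  ∑ z1 : Fin n → Fin K, ∑ z2 : Fin n → Fin K',
    (∏ i, π (z1 i) * π' (z2 i) * C (z1 i) (z2 i)) *
    ((∏ i, ∏ j, if i < j then
        θ1 (z1 i) (z1 j) ^ (x1 i j : ℕ) * (1 - θ1 (z1 i) (z1 j)) ^ (1 - (x1 i j : ℕ)) else 1) *
      (∏ i, ∏ j, if i < j then
        θ2 (z2 i) (z2 j) ^ (x2 i j : ℕ) * (1 - θ2 (z2 i) (z2 j)) ^ (1 - (x2 i j : ℕ)) else 1))

/-- Summing over all symmetric, zero-diagonal `x2` of a product over strict upper-triangular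
pairs equals the product of sums over edge values. -/
lemma sum_sym_prod {n : ℕ} (G : Fin n → Fin n → Fin 2 → ℝ) :
    ∑ x2 ∈ Finset.univ.filter
        (fun x2 : Fin n → Fin n → Fin 2 => (∀ i j, x2 i j = x2 j i) ∧ (∀ i, x2 i i = 0)),
      ∏ p ∈ Finset.univ.filter (fun p : Fin n × Fin n => p.1 < p.2), G p.1 p.2 (x2 p.1 p.2)
    = ∏ p ∈ Finset.univ.filter (fun p : Fin n × Fin n => p.1 < p.2), ∑ v : Fin 2, G p.1 p.2 v := by
  classical
  have hsub : ∀ (F : Fin n × Fin n → ℝ),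
      ∏ p ∈ Finset.univ.filter (fun p : Fin n × Fin n => p.1 < p.2), F p
        = ∏ p : {p : Fin n × Fin n // p.1 < p.2}, F p.1 := by
    intro F
    exact (Finset.prod_subtype _ (fun p => by simp) F)
  rw [hsub, Fintype.prod_sum (fun (p : {p : Fin n × Fin n // p.1 < p.2}) (v : Fin 2) =>
    G p.1.1 p.1.2 v)]
  refine Finset.sum_nbij' (i := fun x2 (p : {p : Fin n × Fin n // p.1 < p.2}) => x2 p.1.1 p.1.2)
    (j := fun f a b => if h : a < b then f ⟨(a, b), h⟩ else if h : b < a then f ⟨(b, a), h⟩ else 0)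
    ?_ ?_ ?_ ?_ ?_
  · intro a _; exact Finset.mem_univ _
  · intro f _
    simp only [Finset.mem_filter, Finset.mem_univ, true_and]
    constructor
    · intro i j
      rcases lt_trichotomy i j with h | h | h
      · rw [dif_pos h, dif_neg (not_lt.2 h.le), dif_pos h]
      · subst h; rfl
      · rw [dif_neg (not_lt.2 h.le), dif_pos h, dif_pos h]
    · intro i; simp
  · intro x2 hx2
    simp only [Finset.mem_filter, Finset.mem_univ, true_and] at hx2
    funext a b
    dsimp only
    rcases lt_trichotomy a b with h | h | h
    · rw [dif_pos h]
    · subst h; simp [hx2.2 a]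
    · rw [dif_neg (not_lt.2 h.le), dif_pos h, hx2.1 a b]
  · intro f _
    funext p
    dsimp only
    rw [dif_pos p.2]
  · intro x2 hx2
    rw [hsub]

/-- Each view marginally follows a single-view SBM: summing the two-view joint likelihood
over all (symmetric, zero-diagonal) second networks gives the first-view SBM likelihood. -/
theorem sbm2L_marginal {n K K' : ℕ} (hn : 1 ≤ n) (hK : 0 < K) (hK' : 0 < K')
    (π : Fin K → ℝ) (π' : Fin K' → ℝ)
    (hπpos : ∀ k, 0 < π k) (hπsum : ∑ k, π k = 1)
    (hπ'pos : ∀ k', 0 < π' k') (hπ'sum : ∑ k', π' k' = 1)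
    (C : Matrix (Fin K) (Fin K') ℝ) (hC : C ∈ Cset π π')
    (θ1 : Matrix (Fin K) (Fin K) ℝ) (θ2 : Matrix (Fin K') (Fin K') ℝ)
    (hθ1symm : ∀ k k', θ1 k k' = θ1 k' k) (hθ1 : ∀ k k', 0 ≤ θ1 k k' ∧ θ1 k k' ≤ 1)
    (hθ2symm : ∀ k k', θ2 k k' = θ2 k' k) (hθ2 : ∀ k k', 0 ≤ θ2 k k' ∧ θ2 k k' ≤ 1)
    (x1 : Fin n → Fin n → Fin 2)
    (hx1symm : ∀ i j, x1 i j = x1 j i) (hx1diag : ∀ i, x1 i i = 0) :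
    ∑ x2 ∈ Finset.univ.filter
        (fun x2 : Fin n → Fin n → Fin 2 => (∀ i j, x2 i j = x2 j i) ∧ (∀ i, x2 i i = 0)),
      sbm2L π π' C θ1 θ2 x1 x2 = sbmL π θ1 x1 := by
  classical
  obtain ⟨hC0, hCrow, hCcol⟩ := hC
  unfold sbm2L sbmL
  rw [Finset.sum_comm]
  refine Finset.sum_congr rfl fun z1 _ => ?_
  rw [Finset.sum_comm]
  have key : ∀ z2 : Fin n → Fin K',
      (∑ x2 ∈ Finset.univ.filter
        (fun x2 : Fin n → Fin n → Fin 2 => (∀ i j, x2 i j = x2 j i) ∧ (∀ i, x2 i i = 0)),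
        ∏ i, ∏ j, if i < j then
          θ2 (z2 i) (z2 j) ^ (x2 i j : ℕ) * (1 - θ2 (z2 i) (z2 j)) ^ (1 - (x2 i j : ℕ)) else 1)
      = 1 := by
    intro z2
    have h1 : ∀ x2 : Fin n → Fin n → Fin 2,
        (∏ i, ∏ j, if i < j then
          θ2 (z2 i) (z2 j) ^ (x2 i j : ℕ) * (1 - θ2 (z2 i) (z2 j)) ^ (1 - (x2 i j : ℕ)) else 1)
        = ∏ p ∈ Finset.univ.filter (fun p : Fin n × Fin n => p.1 < p.2),
            θ2 (z2 p.1) (z2 p.2) ^ (x2 p.1 p.2 : ℕ) *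
              (1 - θ2 (z2 p.1) (z2 p.2)) ^ (1 - (x2 p.1 p.2 : ℕ)) := by
      intro x2
      rw [Finset.prod_filter, ← Finset.prod_product', Finset.univ_product_univ]
    simp only [h1]
    rw [sum_sym_prod
      (fun a b v => θ2 (z2 a) (z2 b) ^ (v : ℕ) * (1 - θ2 (z2 a) (z2 b)) ^ (1 - (v : ℕ)))]
    apply Finset.prod_eq_one
    intro p _
    rw [Fin.sum_univ_two]
    simp only [Fin.val_zero, Fin.val_one, pow_zero, pow_one, one_mul, mul_one, Nat.sub_zero,
      Nat.sub_self]
    ring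
  have h2 : ∀ z2 : Fin n → Fin K',
      (∑ x2 ∈ Finset.univ.filter
        (fun x2 : Fin n → Fin n → Fin 2 => (∀ i j, x2 i j = x2 j i) ∧ (∀ i, x2 i i = 0)),
        (∏ i, π (z1 i) * π' (z2 i) * C (z1 i) (z2 i)) *
        ((∏ i, ∏ j, if i < j then
            θ1 (z1 i) (z1 j) ^ (x1 i j : ℕ) * (1 - θ1 (z1 i) (z1 j)) ^ (1 - (x1 i j : ℕ)) else 1) *
          (∏ i, ∏ j, if i < j then
            θ2 (z2 i) (z2 j) ^ (x2 i j : ℕ) * (1 - θ2 (z2 i) (z2 j)) ^ (1 - (x2 i j : ℕ)) else 1)))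
      = (∏ i, π (z1 i) * π' (z2 i) * C (z1 i) (z2 i)) *
        (∏ i, ∏ j, if i < j then
            θ1 (z1 i) (z1 j) ^ (x1 i j : ℕ) * (1 - θ1 (z1 i) (z1 j)) ^ (1 - (x1 i j : ℕ)) else 1) := by
    intro z2
    simp only [← mul_assoc]
    rw [← Finset.mul_sum, key z2, mul_one]
  simp only [h2]
  rw [← Finset.sum_mul]
  congr 1
  rw [← Fintype.prod_sum (fun i k' => π (z1 i) * π' k' * C (z1 i) k')]
  refine Finset.prod_congr rfl fun i _ => ?_
  calc ∑ k', π (z1 i) * π' k' * C (z1 i) k'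
      = π (z1 i) * ∑ k', C (z1 i) k' * π' k' := by
        rw [Finset.mul_sum]; exact Finset.sum_congr rfl fun k' _ => by ring
    _ = π (z1 i) := by rw [hCrow (z1 i), mul_one]
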